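/- arXiv:2411.01501 — 3 statements merged into one kernel-verified Lean document; each statement's English description precedes it below -/
import Mathlib

section
/- Let f : ℝ → ℝ be continuously differentiable, and suppose |f'(x) - f'(y)| ≤ ρ(|x-y|) for all x, y, where ρ is a concave modulus of continuity with ρ(0) = 0. Then for all x, y ∈ ℝ and all α ≠ 0 with |α| ≥ |x-y|, |Δ_α f(x) - Δ_α f(y)| ≤ ρ(|x-y|), where Δ_α f(x) = (f(x) - f(x-α))/α. -/
theorem stmt_5 (f ρ : ℝ → ℝ) (hf : ContDiff ℝ 1 f)
    (hρ0 : ρ 0 = 0) (hρmono : MonotoneOn ρ (Set.Ici 0))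
    (hρconc : ConcaveOn ℝ (Set.Ici 0) ρ)
    (hρnonneg : ∀ x, 0 ≤ x → 0 ≤ ρ x)
    (hmod : ∀ x y : ℝ, |deriv f x - deriv f y| ≤ ρ |x - y|) :
    ∀ x y α : ℝ, α ≠ 0 → |x - y| ≤ |α| →
      |(f x - f (x - α)) / α - (f y - f (y - α)) / α| ≤ ρ |x - y| := by
  intro x y α hα _
  have hc : Continuous (deriv f) := hf.continuous_deriv le_rfl
  have key : ∀ z : ℝ, f z - f (z - α) = ∫ s in (0:ℝ)..α, deriv f (z - α + s) := by
    intro z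
    have h1 : ∫ t in (z - α)..z, deriv f t = f z - f (z - α) :=
      intervalIntegral.integral_deriv_eq_sub (fun t _ => hf.differentiable one_ne_zero t)
        (hc.intervalIntegrable _ _)
    rw [← h1, intervalIntegral.integral_comp_add_left (deriv f) (z - α)]
    norm_num
  have intg : ∀ z : ℝ, IntervalIntegrable (fun s => deriv f (z - α + s))
      MeasureTheory.volume 0 α := fun z =>
    (hc.comp (continuous_const.add continuous_id)).intervalIntegrable _ _
  have eq1 : (f x - f (x - α)) / α - (f y - f (y - α)) / α
      = (∫ s in (0:ℝ)..α, (deriv f (x - α + s) - deriv f (y - α + s))) / α := by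
    rw [intervalIntegral.integral_sub (intg x) (intg y), ← key x, ← key y]
    ring
  rw [eq1]
  have hb : ‖∫ s in (0:ℝ)..α, (deriv f (x - α + s) - deriv f (y - α + s))‖
      ≤ ρ |x - y| * |α - 0| := by
    apply intervalIntegral.norm_integral_le_of_norm_le_const
    intro t _
    have : (x - α + t) - (y - α + t) = x - y := by ring
    simpa [Real.norm_eq_abs, this] using hmod (x - α + t) (y - α + t)
  rw [abs_div]
  rw [Real.norm_eq_abs] at hb
  have hαpos : 0 < |α| := abs_pos.mpr hα
  rw [div_le_iff₀ hαpos]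
  simpa using hb
end

section
/- Let ρ : [0,∞) → [0,∞) be concave, nondecreasing, with ρ(0) = 0 and twice differentiable on (0,∞) with ρ'' nondecreasing on (0,∞). Then for every z > 0, -∫₀^z (δ_α ρ(z) + δ_{-α} ρ(z))·α^{-2} dα ≤ (z/2)·ρ''(z), where δ_α ρ(z) = ρ(z) - ρ(z-α) and δ_{-α} ρ(z) = ρ(z) - ρ(z+α). -/
set_option maxHeartbeats 1000000

open Set MeasureTheory intervalIntegral

theorem stmt_13 (ρ ρ' ρ'' : ℝ → ℝ)
    (hconc : ConcaveOn ℝ (Set.Ici 0) ρ)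
    (hmono : MonotoneOn ρ (Set.Ici 0))
    (hnonneg : ∀ x, 0 ≤ x → 0 ≤ ρ x) (h0 : ρ 0 = 0)
    (hd1 : ∀ x, 0 < x → HasDerivAt ρ (ρ' x) x)
    (hd2 : ∀ x, 0 < x → HasDerivAt ρ' (ρ'' x) x)
    (hmono'' : MonotoneOn ρ'' (Set.Ioi 0)) :
    ∀ z : ℝ, 0 < z →
      -∫ α in (0:ℝ)..z, ((ρ z - ρ (z - α)) + (ρ z - ρ (z + α))) / α^2
        ≤ z / 2 * ρ'' z := by
  intro z hz
  set f : ℝ → ℝ := fun α => ((ρ z - ρ (z - α)) + (ρ z - ρ (z + α))) / α ^ 2 with hf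
  have hcρ : ∀ x, 0 < x → ContinuousAt ρ x := fun x hx => (hd1 x hx).continuousAt
  have hcρ' : ∀ x, 0 < x → ContinuousAt ρ' x := fun x hx => (hd2 x hx).continuousAt
  -- two-sided bound on increments of ρ' via FTC and monotonicity of ρ''
  have keyρ' : ∀ s t : ℝ, 0 < s → s ≤ t →
      (t - s) * ρ'' s ≤ ρ' t - ρ' s ∧ ρ' t - ρ' s ≤ (t - s) * ρ'' t := by
    intro s t hs hst
    rcases eq_or_lt_of_le hst with rfl | hlt
    · simp
    have ht : 0 < t := hs.trans hlt
    have hIntρ'' : IntervalIntegrable ρ'' volume s t := by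
      apply MonotoneOn.intervalIntegrable
      intro a ha b hb hab
      rw [uIcc_of_le hst] at ha hb
      exact hmono'' (Set.mem_Ioi.2 (hs.trans_le ha.1)) (Set.mem_Ioi.2 (hs.trans_le hb.1)) hab
    have hFTC : ∫ u in s..t, ρ'' u = ρ' t - ρ' s := by
      apply intervalIntegral.integral_eq_sub_of_hasDerivAt
      · intro u hu
        rw [uIcc_of_le hst] at hu
        exact hd2 u (hs.trans_le hu.1)
      · exact hIntρ''
    constructor
    · have h1 : ∫ u in s..t, ρ'' s ≤ ∫ u in s..t, ρ'' u := by
        apply intervalIntegral.integral_mono_on hst (intervalIntegrable_const) hIntρ''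
        intro x hx
        exact hmono'' (Set.mem_Ioi.2 hs) (Set.mem_Ioi.2 (hs.trans_le hx.1)) hx.1
      rw [intervalIntegral.integral_const, hFTC] at h1
      simpa using h1
    · have h1 : ∫ u in s..t, ρ'' u ≤ ∫ u in s..t, ρ'' t := by
        apply intervalIntegral.integral_mono_on hst hIntρ'' (intervalIntegrable_const)
        intro x hx
        exact hmono'' (Set.mem_Ioi.2 (hs.trans_le hx.1)) (Set.mem_Ioi.2 ht) hx.2
      rw [intervalIntegral.integral_const, hFTC] at h1
      simpa using h1
  -- FTC for ρ
  have hFTCρ : ∀ a b : ℝ, 0 < a → a ≤ b → ∫ t in a..b, ρ' t = ρ b - ρ a := by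
    intro a b ha hab
    apply intervalIntegral.integral_eq_sub_of_hasDerivAt
    · intro t ht
      rw [uIcc_of_le hab] at ht
      exact hd1 t (ha.trans_le ht.1)
    · apply ContinuousOn.intervalIntegrable
      intro t ht
      rw [uIcc_of_le hab] at ht
      exact (hcρ' t (ha.trans_le ht.1)).continuousWithinAt
  -- lower pointwise bound: f α ≥ -(ρ'' z)/2 on Ioo 0 z
  have hlow : ∀ α ∈ Set.Ioo (0:ℝ) z, -(ρ'' z) / 2 ≤ f α := by
    intro α hα
    obtain ⟨hα0, hαz⟩ := hα
    have hza : 0 < z - α := sub_pos.2 hαz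
    -- (A) : ρ (z+α) - ρ z ≤ α * ρ' z
    have hA : ρ (z + α) - ρ z ≤ α * ρ' z := by
      have hs := hconc.slope_le_of_hasDerivAt (x := z) (y := z + α)
        (le_of_lt hz) (Set.mem_Ici.2 (by positivity)) (by linarith) (hd1 z hz)
      rw [slope_def_field] at hs
      have hden : z + α - z = α := by ring
      rw [hden, div_le_iff₀ hα0] at hs
      linarith [hs]
    -- (B) : ρ z - ρ (z - α) ≥ α * ρ' z - α^2/2 * ρ'' z
    have hB : α * ρ' z - α ^ 2 / 2 * ρ'' z ≤ ρ z - ρ (z - α) := by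
      have hFTC := hFTCρ (z - α) z hza (by linarith)
      set G : ℝ → ℝ := fun t => ρ' z * t + ρ'' z * (z - t) ^ 2 / 2 with hG
      have hGd : ∀ t : ℝ, HasDerivAt G (ρ' z - (z - t) * ρ'' z) t := by
        intro t
        have h1 : HasDerivAt (fun t : ℝ => ρ' z * t) (ρ' z) t := by
          simpa using (hasDerivAt_id t).const_mul (ρ' z)
        have h2 : HasDerivAt (fun t : ℝ => z - t) (-1) t := by
          simpa using (hasDerivAt_id t).const_sub z
        have h3 : HasDerivAt (fun t : ℝ => (z - t) ^ 2) (2 * (z - t) * (-1)) t := by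
          simpa using (h2.fun_pow 2)
        have h4 := (h1.fun_add ((h3.const_mul (ρ'' z)).div_const 2))
        refine h4.congr_deriv ?_
        ring
      have hgInt : ∫ t in (z - α)..z, (ρ' z - (z - t) * ρ'' z)
          = α * ρ' z - α ^ 2 / 2 * ρ'' z := by
        rw [intervalIntegral.integral_eq_sub_of_hasDerivAt
          (fun t _ => hGd t)
          ((continuous_const.sub ((continuous_const.sub continuous_id).mul continuous_const)).intervalIntegrable _ _)]
        simp only [hG]
        ring
      have hle : ∫ t in (z - α)..z, (ρ' z - (z - t) * ρ'' z) ≤ ∫ t in (z - α)..z, ρ' t := by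
        apply intervalIntegral.integral_mono_on (by linarith)
          ((continuous_const.sub ((continuous_const.sub continuous_id).mul continuous_const)).intervalIntegrable _ _)
          (ContinuousOn.intervalIntegrable ?_)
        · intro x hx
          have hx0 : 0 < x := hza.trans_le hx.1
          have := (keyρ' x z hx0 hx.2).2
          simp only [Pi.sub_apply, Pi.mul_apply, id_eq]
          linarith
        · intro t ht
          rw [uIcc_of_le (by linarith : z - α ≤ z)] at ht
          exact (hcρ' t (hza.trans_le ht.1)).continuousWithinAt
      rw [hgInt, hFTC] at hle
      exact hle
    have hnum : -(α ^ 2) / 2 * ρ'' z ≤ (ρ z - ρ (z - α)) + (ρ z - ρ (z + α)) := by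
      nlinarith [hA, hB]
    have hα2 : (0:ℝ) < α ^ 2 := by positivity
    rw [hf]
    rw [le_div_iff₀ hα2]
    nlinarith [hnum]
  -- upper pointwise bound (for integrability)
  set M : ℝ := max (-2 * ρ'' (z / 2)) (8 * ρ z / z ^ 2) with hM
  have hup : ∀ α ∈ Set.Ioo (0:ℝ) z, f α ≤ M := by
    intro α hα
    obtain ⟨hα0, hαz⟩ := hα
    have hza : 0 < z - α := sub_pos.2 hαz
    have hα2 : (0:ℝ) < α ^ 2 := by positivity
    rcases le_or_gt α (z / 2) with hcase | hcase
    · -- α ≤ z/2 : f α ≤ -2 ρ''(z-α) ≤ -2 ρ''(z/2)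
      have h1 : ρ z - ρ (z - α) ≤ α * ρ' (z - α) := by
        have hs := hconc.slope_le_of_hasDerivAt (x := z - α) (y := z)
          (le_of_lt hza) (le_of_lt hz) (by linarith) (hd1 (z - α) hza)
        rw [slope_def_field] at hs
        have hden : z - (z - α) = α := by ring
        rw [hden, div_le_iff₀ hα0] at hs
        linarith
      have h2 : ρ z - ρ (z + α) ≤ -(α * ρ' (z + α)) := by
        have hs := hconc.le_slope_of_hasDerivAt (x := z) (y := z + α)
          (le_of_lt hz) (Set.mem_Ici.2 (by positivity)) (by linarith) (hd1 (z + α) (by positivity))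
        rw [slope_def_field] at hs
        have hden : z + α - z = α := by ring
        rw [hden, le_div_iff₀ hα0] at hs
        linarith
      have h3 := (keyρ' (z - α) (z + α) hza (by linarith)).1
      have h4 : ρ'' (z / 2) ≤ ρ'' (z - α) :=
        hmono'' (Set.mem_Ioi.2 (by linarith)) (Set.mem_Ioi.2 hza) (by linarith)
      have hnum : (ρ z - ρ (z - α)) + (ρ z - ρ (z + α)) ≤ α ^ 2 * (-2 * ρ'' (z / 2)) := by
        nlinarith [h1, h2, h3, h4]
      rw [hf]
      have : (ρ z - ρ (z - α) + (ρ z - ρ (z + α))) / α ^ 2 ≤ -2 * ρ'' (z / 2) := by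
        rw [div_le_iff₀ hα2]
        nlinarith [hnum]
      exact this.trans (le_max_left _ _)
    · -- z/2 < α : numerator ≤ ρ z, and α² ≥ z²/4
      have h1 : 0 ≤ ρ (z - α) := hnonneg _ (by linarith)
      have h2 : ρ z ≤ ρ (z + α) := hmono (Set.mem_Ici.2 hz.le)
        (Set.mem_Ici.2 (by linarith)) (by linarith)
      have hρ0 : 0 ≤ ρ z := hnonneg _ hz.le
      have hnum : (ρ z - ρ (z - α)) + (ρ z - ρ (z + α)) ≤ ρ z := by linarith
      have hz2 : (0:ℝ) < z ^ 2 := by positivity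
      have : ((ρ z - ρ (z - α)) + (ρ z - ρ (z + α))) / α ^ 2 ≤ 8 * ρ z / z ^ 2 := by
        rw [div_le_div_iff₀ hα2 hz2]
        have h8 : z ^ 2 ≤ 8 * α ^ 2 := by nlinarith
        nlinarith [mul_le_mul_of_nonneg_right hnum hz2.le,
          mul_nonneg hρ0 (by linarith : (0:ℝ) ≤ 8 * α ^ 2 - z ^ 2)]
      exact this.trans (le_max_right _ _)
  -- integrability of f on (0, z)
  have hcontf : ContinuousOn f (Set.Ioo 0 z) := by
    intro α hα
    obtain ⟨hα0, hαz⟩ := hα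
    have c1 : ContinuousAt (fun α : ℝ => ρ (z - α)) α :=
      (hcρ (z - α) (by linarith)).comp ((continuous_const.sub continuous_id).continuousAt)
    have c2 : ContinuousAt (fun α : ℝ => ρ (z + α)) α :=
      (hcρ (z + α) (by positivity)).comp ((continuous_const.add continuous_id).continuousAt)
    have c3 : ContinuousAt f α := by
      apply ContinuousAt.div
      · exact ((continuousAt_const.sub c1).add (continuousAt_const.sub c2))
      · exact (continuous_pow 2).continuousAt
      · positivity
    exact c3.continuousWithinAt
  set C : ℝ := max M (|(-(ρ'' z) / 2)|) with hC
  have habs : ∀ α ∈ Set.Ioo (0:ℝ) z, ‖f α‖ ≤ C := by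
    intro α hα
    rw [Real.norm_eq_abs, abs_le]
    constructor
    · have := hlow α hα
      have h1 : -(ρ'' z) / 2 ≥ -|(-(ρ'' z) / 2)| := neg_abs_le _
      have h2 : |(-(ρ'' z) / 2)| ≤ C := le_max_right _ _
      linarith
    · exact (hup α hα).trans (le_max_left _ _)
  have hIoo : IntegrableOn f (Set.Ioo 0 z) := by
    refine ⟨hcontf.aestronglyMeasurable measurableSet_Ioo, ?_⟩
    exact HasFiniteIntegral.restrict_of_bounded (C := C) measure_Ioo_lt_top
      (ae_restrict_of_forall_mem measurableSet_Ioo habs)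
  have hInt : IntervalIntegrable f volume 0 z := by
    rw [intervalIntegrable_iff, uIoc_of_le hz.le]
    exact hIoo.congr_set_ae (Ioo_ae_eq_Ioc (μ := volume) (a := 0) (b := z)).symm
  -- conclude
  have hmain : ∫ α in (0:ℝ)..z, (-(ρ'' z) / 2) ≤ ∫ α in (0:ℝ)..z, f α := by
    apply intervalIntegral.integral_mono_ae_restrict hz.le intervalIntegrable_const hInt
    have hnull : volume ({0, z} : Set ℝ) = 0 := (Set.toFinite _).measure_zero _
    have h2 : ∀ᵐ x ∂(volume.restrict (Set.Icc 0 z)), x ∉ ({0, z} : Set ℝ) :=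
      ae_restrict_of_ae (measure_eq_zero_iff_ae_notMem.1 hnull)
    have h3 : ∀ᵐ x ∂(volume.restrict (Set.Icc 0 z)), x ∈ Set.Icc (0:ℝ) z :=
      ae_restrict_mem measurableSet_Icc
    filter_upwards [h2, h3] with x hx1 hx2
    have hx0 : x ≠ 0 := fun h => hx1 (by simp [h])
    have hxz : x ≠ z := fun h => hx1 (by simp [h])
    exact hlow x ⟨lt_of_le_of_ne hx2.1 (Ne.symm hx0), lt_of_le_of_ne hx2.2 hxz⟩
  rw [intervalIntegral.integral_const] at hmain
  simp only [smul_eq_mul, sub_zero] at hmain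
  have : -∫ α in (0:ℝ)..z, f α ≤ z * (ρ'' z) / 2 := by linarith
  calc -∫ α in (0:ℝ)..z, ((ρ z - ρ (z - α)) + (ρ z - ρ (z + α))) / α ^ 2
      = -∫ α in (0:ℝ)..z, f α := rfl
    _ ≤ z * (ρ'' z) / 2 := this
    _ = z / 2 * ρ'' z := by ring
end

section
/- Let ρ : [0,∞) → [0,∞) be concave, nondecreasing, differentiable on (0,∞) with ρ(0) = 0, and suppose ρ(2z) ≤ (3/2)·ρ(z) for a given z > 0. Then ∫_z^∞ (ρ(α+z) - ρ(α) - ρ(z))·α^{-2} dα ≤ -(1/2)·ρ(z)/z + ∫_z^∞ (ρ'(h+z) - ρ'(h))/h dh. -/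
open MeasureTheory Filter Set Topology

theorem stmt_14 (ρ ρ' : ℝ → ℝ)
    (hconc : ConcaveOn ℝ (Set.Ici 0) ρ)
    (hmono : MonotoneOn ρ (Set.Ici 0))
    (hnonneg : ∀ x, 0 ≤ x → 0 ≤ ρ x) (h0 : ρ 0 = 0)
    (hd : ∀ x, 0 < x → HasDerivAt ρ (ρ' x) x)
    (z : ℝ) (hz : 0 < z) (hdoub : ρ (2 * z) ≤ (3 / 2) * ρ z) :
    ∫ α in Set.Ioi z, (ρ (α + z) - ρ α - ρ z) / α^2
      ≤ -(1 / 2) * ρ z / z + ∫ h in Set.Ioi z, (ρ' (h + z) - ρ' h) / h := by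
  have hρcont : ∀ x : ℝ, 0 < x → ContinuousAt ρ x := fun x hx => (hd x hx).continuousAt
  -- three-point concavity inequality
  have h3 : ∀ x t y : ℝ, 0 ≤ x → x < t → t < y →
      ρ x * (y - t) + ρ y * (t - x) ≤ ρ t * (y - x) := by
    intro x t y hx hxt hty
    have hyx : (0:ℝ) < y - x := by linarith
    have ha : (0:ℝ) ≤ (y - t)/(y - x) := div_nonneg (by linarith) hyx.le
    have hb : (0:ℝ) ≤ (t - x)/(y - x) := div_nonneg (by linarith) hyx.le
    have hab : (y - t)/(y - x) + (t - x)/(y - x) = 1 := by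
      rw [← add_div, div_eq_one_iff_eq hyx.ne']; ring
    have hc := hconc.2 (Set.mem_Ici.mpr hx) (Set.mem_Ici.mpr (by linarith : (0:ℝ) ≤ y)) ha hb hab
    simp only [smul_eq_mul] at hc
    have he : (y - t)/(y - x) * x + (t - x)/(y - x) * y = t := by
      field_simp
      ring
    rw [he] at hc
    have hc' := mul_le_mul_of_nonneg_right hc hyx.le
    have heq : ρ x * (y - t) + ρ y * (t - x)
        = ((y - t)/(y - x) * ρ x + (t - x)/(y - x) * ρ y) * (y - x) := by
      field_simp
    rw [heq]
    exact hc'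
  -- the derivative is antitone on (0, ∞)
  have hanti : ∀ x y : ℝ, 0 < x → x < y → ρ' y ≤ ρ' x := by
    intro x y hx hxy
    have hy : 0 < y := hx.trans hxy
    have hslope1 : (ρ y - ρ x)/(y - x) ≤ ρ' x := by
      have ht : Tendsto (slope ρ x) (𝓝[>] x) (𝓝 (ρ' x)) :=
        (hasDerivAt_iff_tendsto_slope.mp (hd x hx)).mono_left
          (nhdsWithin_mono _ fun t ht' => ne_of_gt ht')
      refine ge_of_tendsto ht ?_
      filter_upwards [Ioo_mem_nhdsGT_of_mem (Set.mem_Ico.mpr ⟨le_refl x, hxy⟩)] with t ht'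
      rw [slope_def_field]
      rw [div_le_div_iff₀ (by linarith [ht'.1, ht'.2] : (0:ℝ) < y - x)
        (by linarith [ht'.1] : (0:ℝ) < t - x)]
      nlinarith [h3 x t y hx.le ht'.1 ht'.2]
    have hslope2 : ρ' y ≤ (ρ y - ρ x)/(y - x) := by
      have ht : Tendsto (slope ρ y) (𝓝[<] y) (𝓝 (ρ' y)) :=
        (hasDerivAt_iff_tendsto_slope.mp (hd y hy)).mono_left
          (nhdsWithin_mono _ fun t ht' => ne_of_lt ht')
      refine le_of_tendsto ht ?_
      filter_upwards [Ioo_mem_nhdsLT_of_mem (Set.mem_Ioc.mpr ⟨hxy, le_refl y⟩)] with t ht'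
      rw [slope_comm, slope_def_field]
      rw [div_le_div_iff₀ (by linarith [ht'.2] : (0:ℝ) < y - t)
        (by linarith : (0:ℝ) < y - x)]
      nlinarith [h3 x t y hx.le ht'.1 ht'.2]
    linarith
  -- subadditivity
  have hsubadd : ∀ a : ℝ, 0 ≤ a → ρ (a + z) ≤ ρ a + ρ z := by
    intro a ha
    rcases eq_or_lt_of_le ha with h | h
    · simp [← h, h0]
    · have h1 := h3 0 a (a + z) le_rfl h (by linarith)
      have h2 := h3 0 z (a + z) le_rfl hz (by linarith)
      rw [h0] at h1 h2
      have hpos : (0:ℝ) < a + z := by linarith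
      refine le_of_mul_le_mul_right ?_ hpos
      nlinarith [h1, h2]
  have hFle : ∀ α : ℝ, 0 ≤ α → ρ (α + z) - ρ α - ρ z ≤ 0 := fun α hα => by
    linarith [hsubadd α hα]
  have hFge : ∀ α : ℝ, 0 ≤ α → -ρ z ≤ ρ (α + z) - ρ α - ρ z := fun α hα => by
    have := hmono (Set.mem_Ici.mpr hα) (Set.mem_Ici.mpr (by linarith : (0:ℝ) ≤ α + z))
      (by linarith : α ≤ α + z)
    linarith
  -- derivative of F
  have hFd : ∀ α : ℝ, 0 < α →
      HasDerivAt (fun α => ρ (α + z) - ρ α - ρ z) (ρ' (α + z) - ρ' α) α := by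
    intro α hα
    have h1 : HasDerivAt (fun α : ℝ => ρ (α + z)) (ρ' (α + z)) α :=
      HasDerivAt.comp_add_const α z (hd (α + z) (by linarith))
    exact (h1.sub (hd α hα)).sub_const _
  -- F' is nonpositive on Ioi 0
  have hF'neg : ∀ α : ℝ, 0 < α → ρ' (α + z) - ρ' α ≤ 0 := fun α hα =>
    sub_nonpos.mpr (hanti α (α + z) hα (by linarith))
  -- F continuous at points of Ici z
  have hFcont : ∀ α : ℝ, 0 < α → ContinuousAt (fun α => ρ (α + z) - ρ α - ρ z) α := by
    intro α hα
    have h1 : ContinuousAt (fun α : ℝ => ρ (α + z)) α :=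
      (HasDerivAt.comp_add_const α z (hd (α + z) (by linarith))).continuousAt
    exact (h1.sub (hρcont α hα)).sub continuousAt_const
  -- F is antitone on Ici z
  have hFanti : AntitoneOn (fun α => ρ (α + z) - ρ α - ρ z) (Set.Ici z) := by
    apply antitoneOn_of_deriv_nonpos (convex_Ici z)
    · exact fun α hα => (hFcont α (lt_of_lt_of_le hz hα)).continuousWithinAt
    · intro α hα
      rw [interior_Ici] at hα
      exact (hFd α (hz.trans hα)).differentiableAt.differentiableWithinAt
    · intro α hα
      rw [interior_Ici] at hα
      rw [(hFd α (hz.trans hα)).deriv]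
      exact hF'neg α (hz.trans hα)
  -- F tends to a limit at infinity
  obtain ⟨l, hl⟩ : ∃ l, Tendsto (fun α => ρ (α + z) - ρ α - ρ z) atTop (𝓝 l) := by
    have hGanti : Antitone (fun x : ℝ => ρ (max x z + z) - ρ (max x z) - ρ z) := by
      intro x y hxy
      exact hFanti (Set.mem_Ici.mpr (le_max_right x z)) (Set.mem_Ici.mpr (le_max_right y z))
        (max_le_max hxy le_rfl)
    have hGbdd : BddBelow (Set.range fun x : ℝ => ρ (max x z + z) - ρ (max x z) - ρ z) := by
      refine ⟨-ρ z, ?_⟩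
      rintro w ⟨x, rfl⟩
      exact hFge _ (le_trans hz.le (le_max_right x z))
    refine ⟨_, (tendsto_atTop_ciInf hGanti hGbdd).congr' ?_⟩
    filter_upwards [eventually_ge_atTop z] with x hx
    rw [max_eq_left hx]
  -- integrability of F' on Ioi z
  have hF'int : IntegrableOn (fun α => ρ' (α + z) - ρ' α) (Set.Ioi z) := by
    exact integrableOn_Ioi_deriv_of_nonpos (hFcont z hz).continuousWithinAt
      (fun x hx => hFd x (hz.trans hx)) (fun x hx => hF'neg x (hz.trans hx)) hl
  -- integrability of F'/h on Ioi z
  have hF'hint : IntegrableOn (fun h => (ρ' (h + z) - ρ' h) / h) (Set.Ioi z) := by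
    have hm : AEStronglyMeasurable (fun h : ℝ => (ρ' (h + z) - ρ' h) / h)
        (volume.restrict (Set.Ioi z)) :=
      (hF'int.aemeasurable.div aemeasurable_id).aestronglyMeasurable
    have hb : Integrable (fun h : ℝ => ‖ρ' (h + z) - ρ' h‖ / z)
        (volume.restrict (Set.Ioi z)) := hF'int.norm.div_const z
    refine hb.mono' hm ?_
    filter_upwards [ae_restrict_mem measurableSet_Ioi] with h hh
    rw [norm_div]
    have hh0 : 0 < h := hz.trans hh
    rw [Real.norm_eq_abs h, abs_of_pos hh0]
    gcongr
    exact le_of_lt hh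
  -- integrability of F/α² on Ioi z
  have hFsqint : IntegrableOn (fun α => (ρ (α + z) - ρ α - ρ z) / α^2) (Set.Ioi z) := by
    have hbig : IntegrableOn (fun α : ℝ => ρ z * α ^ (-2:ℝ)) (Set.Ioi z) :=
      (integrableOn_Ioi_rpow_of_lt (by norm_num) hz).const_mul (ρ z)
    refine Integrable.mono' hbig ?_ ?_
    · refine ContinuousOn.aestronglyMeasurable ?_ measurableSet_Ioi
      intro α hα
      have hα0 : 0 < α := hz.trans hα
      exact ((hFcont α hα0).div (continuousAt_pow α 2)
        (pow_ne_zero _ hα0.ne')).continuousWithinAt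
    · filter_upwards [ae_restrict_mem measurableSet_Ioi] with α hα
      have hα0 : 0 < α := hz.trans hα
      have hrw : α ^ (-2:ℝ) = (α ^ 2)⁻¹ := by
        rw [Real.rpow_neg hα0.le]
        congr 1
        rw [show (2:ℝ) = ((2:ℕ):ℝ) by norm_num, Real.rpow_natCast]
      rw [hrw, ← div_eq_mul_inv, norm_div, Real.norm_eq_abs (α ^ 2),
        abs_of_pos (by positivity : (0:ℝ) < α ^ 2), Real.norm_eq_abs]
      gcongr
      rw [abs_le]
      exact ⟨hFge α hα0.le, le_trans (hFle α hα0.le) (hnonneg z hz.le)⟩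
  -- derivative of g = -F/α
  have hgd : ∀ α ∈ Set.Ioi z, HasDerivAt (fun α => -(ρ (α + z) - ρ α - ρ z) / α)
      ((ρ (α + z) - ρ α - ρ z) / α^2 - (ρ' (α + z) - ρ' α) / α) α := by
    intro α hα
    have hα0 : 0 < α := hz.trans hα
    have h1 : HasDerivAt (fun α => -(ρ (α + z) - ρ α - ρ z)) (-(ρ' (α + z) - ρ' α)) α :=
      (hFd α hα0).neg
    have h2 := h1.fun_div (hasDerivAt_id α) hα0.ne'
    refine h2.congr_deriv ?_
    simp only [id_eq]
    field_simp
    ring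
  -- g tends to 0 at infinity
  have hgtend : Tendsto (fun α => -(ρ (α + z) - ρ α - ρ z) / α) atTop (𝓝 0) := by
    have hup : Tendsto (fun α : ℝ => ρ z / α) atTop (𝓝 0) :=
      Tendsto.div_atTop tendsto_const_nhds tendsto_id
    refine tendsto_of_tendsto_of_tendsto_of_le_of_le' tendsto_const_nhds hup ?_ ?_
    · filter_upwards [eventually_gt_atTop (0:ℝ)] with α hα
      exact div_nonneg (by linarith [hFle α hα.le]) hα.le
    · filter_upwards [eventually_gt_atTop (0:ℝ)] with α hα
      have := hFge α hα.le
      gcongr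
      linarith
  -- continuity of g at z
  have hcontg : ContinuousWithinAt (fun α => -(ρ (α + z) - ρ α - ρ z) / α) (Set.Ici z) z :=
    (((hFcont z hz).neg).div continuousAt_id hz.ne').continuousWithinAt
  have hg'int : IntegrableOn
      (fun α => (ρ (α + z) - ρ α - ρ z) / α^2 - (ρ' (α + z) - ρ' α) / α) (Set.Ioi z) :=
    hFsqint.sub hF'hint
  have hgint := integral_Ioi_of_hasDerivAt_of_tendsto hcontg hgd hg'int hgtend
  simp only [zero_sub, neg_neg] at hgint
  -- split the integral
  have hsplit : (∫ α in Set.Ioi z, (ρ (α + z) - ρ α - ρ z) / α^2)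
      = (∫ α in Set.Ioi z, ((ρ (α + z) - ρ α - ρ z) / α^2 - (ρ' (α + z) - ρ' α) / α))
        + ∫ h in Set.Ioi z, (ρ' (h + z) - ρ' h) / h := by
    rw [← integral_add hg'int hF'hint]
    congr 1
    funext α
    ring
  rw [hsplit, hgint]
  have h2z : ρ (z + z) ≤ 3 / 2 * ρ z := by rw [← two_mul]; exact hdoub
  have hfin : (ρ (z + z) - ρ z - ρ z) / z ≤ -(1 / 2) * ρ z / z := by
    gcongr
    linarith
  have hne : -(-(ρ (z + z) - ρ z - ρ z) / z) = (ρ (z + z) - ρ z - ρ z) / z := by ring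
  linarith [hfin, hne]
end
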